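/- Let f ∈ H with Σ_n λ_n^{2p}|⟨f, φ_n⟩|² ≤ ϱ², where λ_n ≥ λ₁ > 0 is nondecreasing, p ≥ b > 0, α > 0, and define f_α by ⟨f_α, φ_n⟩ = ⟨f, φ_n⟩/(1 + α·λ_n^b). Then ‖f - f_α‖ ≤ λ₁^{b-p}·ϱ·α. -/
import Mathlib


open scoped RealInnerProductSpace

theorem stmt_14 {H : Type*} [NormedAddCommGroup H] [InnerProductSpace ℝ H]
    (φ : HilbertBasis ℕ ℝ H) (lam : ℕ → ℝ) (lam1 p b α ϱ : ℝ)
    (hb : 0 < b) (hpb : b ≤ p) (hα : 0 < α) (hϱ : 0 < ϱ) (hlam1 : 0 < lam1)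
    (hlamlow : ∀ n, lam1 ≤ lam n) (hlammono : Monotone lam)
    (f fα : H)
    (hsum : Summable (fun n => (lam n) ^ (2 * p) * |⟪f, φ n⟫|^2))
    (hsrc : ∑' n, (lam n) ^ (2 * p) * |⟪f, φ n⟫|^2 ≤ ϱ ^ 2)
    (hfα : ∀ n, ⟪fα, φ n⟫ = ⟪f, φ n⟫ / (1 + α * (lam n) ^ b)) :
    ‖f - fα‖ ≤ lam1 ^ (b - p) * ϱ * α := by
  set c : ℕ → ℝ := fun n => ⟪f, φ n⟫ with hc
  set g := f - fα with hg
  set K : ℝ := lam1 ^ (b - p) * α with hK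
  have hd : ∀ n, ⟪g, φ n⟫ = c n * (α * (lam n) ^ b) / (1 + α * (lam n) ^ b) := by
    intro n
    have hln : 0 < lam n := lt_of_lt_of_le hlam1 (hlamlow n)
    have hLb : 0 < (lam n) ^ b := Real.rpow_pos_of_pos hln b
    have hA : (0:ℝ) < 1 + α * (lam n) ^ b := by nlinarith
    rw [hg, inner_sub_left, hfα]
    field_simp
    ring
  have key : ∀ n, ⟪g, φ n⟫ * ⟪g, φ n⟫ ≤ K ^ 2 * ((lam n) ^ (2 * p) * |c n| ^ 2) := by
    intro n
    have hln : 0 < lam n := lt_of_lt_of_le hlam1 (hlamlow n)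
    have hLb : 0 < (lam n) ^ b := Real.rpow_pos_of_pos hln b
    have hLp : 0 < (lam n) ^ p := Real.rpow_pos_of_pos hln p
    have hA : (1:ℝ) ≤ 1 + α * (lam n) ^ b := by nlinarith
    have h1 : (lam n) ^ b ≤ (lam n) ^ p * lam1 ^ (b - p) := by
      have e : (lam n) ^ b = (lam n) ^ p * (lam n) ^ (b - p) := by
        rw [← Real.rpow_add hln]; ring_nf
      rw [e]
      have h2 : (lam n) ^ (b - p) ≤ lam1 ^ (b - p) :=
        Real.rpow_le_rpow_of_nonpos hlam1 (hlamlow n) (by linarith)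
      exact mul_le_mul_of_nonneg_left h2 hLp.le
    have h2p : (lam n) ^ (2 * p) = (lam n) ^ p * (lam n) ^ p := by
      rw [← Real.rpow_add hln]; ring_nf
    rw [hd n, sq_abs]
    have hfrac : c n * (α * (lam n) ^ b) / (1 + α * (lam n) ^ b) *
        (c n * (α * (lam n) ^ b) / (1 + α * (lam n) ^ b)) ≤ (c n * α * (lam n) ^ b) ^ 2 := by
      rw [div_mul_div_comm]
      have hx : (0:ℝ) ≤ c n * (α * (lam n) ^ b) * (c n * (α * (lam n) ^ b)) := by
        exact mul_self_nonneg _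
      have hAA : (1:ℝ) ≤ (1 + α * (lam n) ^ b) * (1 + α * (lam n) ^ b) := by nlinarith
      calc c n * (α * (lam n) ^ b) * (c n * (α * (lam n) ^ b)) /
            ((1 + α * (lam n) ^ b) * (1 + α * (lam n) ^ b))
          ≤ c n * (α * (lam n) ^ b) * (c n * (α * (lam n) ^ b)) := by
            apply div_le_self hx hAA
        _ = (c n * α * (lam n) ^ b) ^ 2 := by ring
    refine hfrac.trans ?_
    have h1sq : ((lam n) ^ b) ^ 2 ≤ ((lam n) ^ p * lam1 ^ (b - p)) ^ 2 :=
      pow_le_pow_left₀ hLb.le h1 2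
    have hmul := mul_le_mul_of_nonneg_left h1sq
      (mul_nonneg (sq_nonneg (c n)) (sq_nonneg α))
    rw [hK, h2p]; nlinarith [hmul]
  have hgsum : HasSum (fun n => ⟪g, φ n⟫ * ⟪g, φ n⟫) (‖g‖ ^ 2) := by
    have h := φ.hasSum_inner_mul_inner g g
    simpa [real_inner_comm, real_inner_self_eq_norm_sq] using h
  have hS : Summable (fun n => K ^ 2 * ((lam n) ^ (2 * p) * |c n| ^ 2)) := hsum.mul_left _
  have hsum2 : ‖g‖ ^ 2 ≤ K ^ 2 * ϱ ^ 2 := by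
    have h1 : ‖g‖ ^ 2 ≤ ∑' n, K ^ 2 * ((lam n) ^ (2 * p) * |c n| ^ 2) := by
      rw [← hgsum.tsum_eq]
      exact Summable.tsum_le_tsum key hgsum.summable hS
    have h2 : ∑' n, K ^ 2 * ((lam n) ^ (2 * p) * |c n| ^ 2) ≤ K ^ 2 * ϱ ^ 2 := by
      rw [tsum_mul_left]
      exact mul_le_mul_of_nonneg_left hsrc (sq_nonneg K)
    linarith
  have hT : 0 ≤ lam1 ^ (b - p) * ϱ * α := by positivity
  have hKT : K ^ 2 * ϱ ^ 2 = (lam1 ^ (b - p) * ϱ * α) ^ 2 := by rw [hK]; ring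
  rw [hKT] at hsum2
  nlinarith [norm_nonneg g, hsum2, hT]
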